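/- Let p > 1 and 1 < q < p with gcd(p,q) = 1, and let (a,b) satisfy a·q - b·p = 1 with 0 < a ≤ p, 0 < b ≤ q. Let d be a positive integer such that p divides d² and p divides (q-a)·d. Then for every integer n, gcd(p, q + n·d) = 1. -/

import Mathlib

theorem stmt_3 (p q a b d : ℤ) (hp : 1 < p) (hq : 1 < q) (hqp : q < p)
    (hcop : Int.gcd p q = 1)
    (ha : 0 < a) (hap : a ≤ p) (hb : 0 < b) (hbq : b ≤ q)
    (hbez : a * q - b * p = 1)
    (hd : 0 < d) (hd2 : p ∣ d ^ 2) (hqad : p ∣ (q - a) * d) :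
    ∀ n : ℤ, Int.gcd p (q + n * d) = 1 := by
  intro n
  set g : ℤ := (Int.gcd p (q + n * d) : ℤ) with hg
  have h1 : g ∣ p := Int.gcd_dvd_left p (q + n * d)
  have h2 : g ∣ q + n * d := Int.gcd_dvd_right p (q + n * d)
  have hdd : g ∣ d ^ 2 := h1.trans hd2
  have hqad' : g ∣ (q - a) * d := h1.trans hqad
  have hqd : g ∣ q * d := by
    have := dvd_sub (h2.mul_right d) (hdd.mul_left n)
    have e : (q + n * d) * d - n * d ^ 2 = q * d := by ring
    rwa [e] at this
  have had : g ∣ a * d := by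
    have := dvd_sub hqd hqad'
    have e : q * d - (q - a) * d = a * d := by ring
    rwa [e] at this
  have haq : g ∣ a * q := by
    have := dvd_sub (h2.mul_left a) (had.mul_left n)
    have e : a * (q + n * d) - n * (a * d) = a * q := by ring
    rwa [e] at this
  have h1' : g ∣ 1 := by
    have := dvd_sub haq (h1.mul_left b)
    rwa [hbez] at this
  have := Int.eq_one_of_dvd_one (Int.natCast_nonneg _) h1'
  exact_mod_cast this
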